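/- arXiv:2009.02680 — 9 statements merged into one kernel-verified Lean document; each statement's English description precedes it below -/
import Mathlib

section
/- Let z_A, z_B, z_C ∈ ℂ and r_A, r_B, r_C > 0 be the centers and radii of three pairwise externally tangent circles, i.e. |z_A − z_B| = r_A + r_B, |z_B − z_C| = r_B + r_C, |z_C − z_A| = r_C + r_A. Suppose a, b ∈ ℂ satisfy a² = (z_A − z_C)/(r_C r_A) and b² = (z_B − z_C)/(r_C r_B). Then (Im(conj(a) · b))² = (1/r_C)²; that is, up to the sign ambiguity of the spinors, the cross product a × b equals the curvature C = 1/r_C of the common anchor disk. -/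
/-- **Cross product of two tangency spinors anchored at a common disk.**
For three pairwise externally tangent circles with centers `z_A z_B z_C` and radii
`r_A r_B r_C > 0`, if `a² = (z_A − z_C)/(r_C r_A)` and `b² = (z_B − z_C)/(r_C r_B)`,
then `(a × b)² = (Im(conj a · b))² = (1/r_C)²`: up to sign, the cross product of the
two spinors equals the curvature of the common anchor disk `C`. -/
theorem tangency_spinor_cross (zA zB zC : ℂ) (rA rB rC : ℝ)
    (hrA : 0 < rA) (hrB : 0 < rB) (hrC : 0 < rC)
    (hAB : ‖zA - zB‖ = rA + rB)
    (hBC : ‖zB - zC‖ = rB + rC)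
    (hCA : ‖zC - zA‖ = rC + rA)
    (a b : ℂ)
    (ha : a ^ 2 = (zA - zC) / ((rC : ℂ) * (rA : ℂ)))
    (hb : b ^ 2 = (zB - zC) / ((rC : ℂ) * (rB : ℂ))) :
    ((starRingEnd ℂ) a * b).im ^ 2 = (1 / rC) ^ 2 := by
  set w := (starRingEnd ℂ) a * b with hw
  -- norms of a and b
  have habsA : ‖zA - zC‖ = rC + rA := by
    rw [← neg_sub, norm_neg, hCA]
  have hna : Complex.normSq a = (rC + rA) / (rC * rA) := by
    rw [← Complex.sq_norm, ← norm_pow, ha, norm_div, habsA, norm_mul,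
      Complex.norm_real, Complex.norm_real, Real.norm_eq_abs, Real.norm_eq_abs, abs_of_pos hrC, abs_of_pos hrA]
  have hnb : Complex.normSq b = (rB + rC) / (rC * rB) := by
    rw [← Complex.sq_norm, ← norm_pow, hb, norm_div, hBC, norm_mul,
      Complex.norm_real, Complex.norm_real, Real.norm_eq_abs, Real.norm_eq_abs, abs_of_pos hrC, abs_of_pos hrB]
  have h1 : w.re ^ 2 + w.im ^ 2 = ((rC + rA) / (rC * rA)) * ((rB + rC) / (rC * rB)) := by
    have : Complex.normSq w = Complex.normSq a * Complex.normSq b := by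
      rw [hw, map_mul, Complex.normSq_conj]
    rw [Complex.normSq_apply] at this
    rw [← hna, ← hnb, ← this]; ring
  -- dot product of center vectors
  have e1 : Complex.normSq (zA - zB) = (rA + rB)^2 := by rw [← Complex.sq_norm, hAB]
  have e2 : Complex.normSq (zB - zC) = (rB + rC)^2 := by rw [← Complex.sq_norm, hBC]
  have e3 : Complex.normSq (zC - zA) = (rC + rA)^2 := by rw [← Complex.sq_norm, hCA]
  simp only [Complex.normSq_apply, Complex.sub_re, Complex.sub_im] at e1 e2 e3
  have hdot : (zA.re - zC.re) * (zB.re - zC.re) + (zA.im - zC.im) * (zB.im - zC.im)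
      = rC^2 + rC*rA + rC*rB - rA*rB := by
    linear_combination (e2 + e3 - e1) / 2
  -- Re(w^2)
  have hw2 : w ^ 2 = (starRingEnd ℂ) ((zA - zC)) * (zB - zC) / ((rC:ℂ)^2 * rA * rB) := by
    rw [hw, mul_pow, ← map_pow, ha, hb, map_div₀]
    rw [map_mul, Complex.conj_ofReal, Complex.conj_ofReal]
    ring
  have h2 : w.re ^ 2 - w.im ^ 2 = (rC^2 + rC*rA + rC*rB - rA*rB) / (rC^2 * rA * rB) := by
    have := congrArg Complex.re hw2
    rw [show (w^2).re = w.re^2 - w.im^2 by rw [sq]; simp [Complex.mul_re]; ring] at this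
    rw [this]
    rw [show ((rC:ℂ)^2 * rA * rB) = ((rC^2*rA*rB : ℝ) : ℂ) by push_cast; ring,
      Complex.div_ofReal_re]
    simp [Complex.mul_re, Complex.sub_re, Complex.sub_im]
    rw [← hdot]; ring
  have h3 : 2 * w.im ^ 2 = 2 / rC ^ 2 := by
    rw [show 2 * w.im^2 = (w.re^2 + w.im^2) - (w.re^2 - w.im^2) by ring, h1, h2]
    field_simp
    ring
  linear_combination h3 / 2
end

section
/- For every z ∈ ℂ, writing x = Re z, y = Im z and (A, B, C) = κ(z) = (1 − y, x² + y² − y, y), one has AB + BC + CA = x². Consequently the two Descartes completions of the triple are A + B + C ± 2|x|. -/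
/-- The curvature triple `κ(z) = (1 − y, x² + y² − y, y)` encoded by the
projective tangency spinor `z = x + iy`. -/
noncomputable def kappa (z : ℂ) : ℝ × ℝ × ℝ :=
  (1 - z.im, z.re ^ 2 + z.im ^ 2 - z.im, z.im)

/-- **The Descartes discriminant of `κ(z)` is `x²`.**
For `(A, B, C) = κ(z)` one has `AB + BC + CA = x²`, so the two Descartes
completions of the triple are `A + B + C ± 2|x|`. -/
theorem kappa_discriminant (z : ℂ) :
    (kappa z).1 * (kappa z).2.1 + (kappa z).2.1 * (kappa z).2.2 +
        (kappa z).2.2 * (kappa z).1 = z.re ^ 2 ∧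
      (kappa z).1 + (kappa z).2.1 + (kappa z).2.2 +
          2 * Real.sqrt ((kappa z).1 * (kappa z).2.1 + (kappa z).2.1 * (kappa z).2.2 +
            (kappa z).2.2 * (kappa z).1) =
        (kappa z).1 + (kappa z).2.1 + (kappa z).2.2 + 2 * |z.re| ∧
      (kappa z).1 + (kappa z).2.1 + (kappa z).2.2 -
          2 * Real.sqrt ((kappa z).1 * (kappa z).2.1 + (kappa z).2.1 * (kappa z).2.2 +
            (kappa z).2.2 * (kappa z).1) =
        (kappa z).1 + (kappa z).2.1 + (kappa z).2.2 - 2 * |z.re| := by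
  have h : (kappa z).1 * (kappa z).2.1 + (kappa z).2.1 * (kappa z).2.2 +
      (kappa z).2.2 * (kappa z).1 = z.re ^ 2 := by
    simp only [kappa]; ring
  refine ⟨h, ?_, ?_⟩ <;> rw [h, Real.sqrt_sq_eq_abs]
end

section
/- For all real numbers A, B, C with A + C > 0 and AB + BC + CA ≥ 0, there exist unique x ≥ 0, y ∈ ℝ and λ > 0 such that λ(1 − y) = A, λ(x² + y² − y) = B and λ·y = C; explicitly λ = A + C, y = C/(A + C), x = √(AB + BC + CA)/(A + C). Thus every curvature triple of a tricycle is, up to a positive scale, of the form κ(z) for a unique z = x + iy with x ≥ 0. -/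
lemma tricycle_aux (A B C : ℝ) (hAC : 0 < A + C)
    (hD : 0 ≤ A * B + B * C + C * A) :
    letI x := Real.sqrt (A * B + B * C + C * A) / (A + C)
    letI y := C / (A + C)
    letI l := A + C
    0 ≤ x ∧ 0 < l ∧ l * (1 - y) = A ∧ l * (x ^ 2 + y ^ 2 - y) = B ∧ l * y = C := by
  have hne : (A + C) ≠ 0 := ne_of_gt hAC
  have hs : Real.sqrt (A * B + B * C + C * A) ^ 2 = A * B + B * C + C * A :=
    Real.sq_sqrt hD
  refine ⟨by positivity, hAC, by field_simp; ring, ?_, by field_simp⟩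
  field_simp
  have hs' : Real.sqrt ((A + C) * B + A * C) ^ 2 = (A + C) * B + A * C :=
    Real.sq_sqrt (by linarith)
  nlinarith [hs']

/-- **Parametrization of tricycles by the projective spinor plane.**
For all reals `A B C` with `A + C > 0` and `AB + BC + CA ≥ 0` there exist unique
`x ≥ 0`, `y ∈ ℝ`, `λ > 0` with `λ(1 − y) = A`, `λ(x² + y² − y) = B`, `λy = C`;
explicitly `λ = A + C`, `y = C/(A + C)`, `x = √(AB + BC + CA)/(A + C)`. -/
theorem tricycle_parametrization (A B C : ℝ) (hAC : 0 < A + C)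
    (hD : 0 ≤ A * B + B * C + C * A) :
    (∃! p : ℝ × ℝ × ℝ,
        0 ≤ p.1 ∧ 0 < p.2.2 ∧
          p.2.2 * (1 - p.2.1) = A ∧
          p.2.2 * (p.1 ^ 2 + p.2.1 ^ 2 - p.2.1) = B ∧
          p.2.2 * p.2.1 = C) ∧
      (letI x := Real.sqrt (A * B + B * C + C * A) / (A + C)
       letI y := C / (A + C)
       letI l := A + C
       0 ≤ x ∧ 0 < l ∧ l * (1 - y) = A ∧ l * (x ^ 2 + y ^ 2 - y) = B ∧ l * y = C) := by
  have haux := tricycle_aux A B C hAC hD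
  obtain ⟨hx0, hl0, h1, h2, h3⟩ := haux
  refine ⟨⟨(Real.sqrt (A * B + B * C + C * A) / (A + C), C / (A + C), A + C),
      ⟨hx0, hl0, h1, h2, h3⟩, ?_⟩, hx0, hl0, h1, h2, h3⟩
  rintro ⟨x, y, l⟩ ⟨hx, hl, e1, e2, e3⟩
  dsimp only at hx hl e1 e2 e3
  have hle : l = A + C := by linarith [e1, e3]
  subst hle
  have hne : (A + C) ≠ 0 := ne_of_gt hAC
  have hy : y = C / (A + C) := by field_simp; linarith [e3, mul_comm y (A + C)]
  subst hy
  have hx2 : x ^ 2 * (A + C) ^ 2 = A * B + B * C + C * A := by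
    field_simp at e2
    have key : (A + C) ^ 2 * (x ^ 2 * (A + C) ^ 2) =
        (A + C) ^ 2 * (A * B + B * C + C * A) := by linear_combination (A + C) ^ 2 * e2
    exact mul_left_cancel₀ (pow_ne_zero 2 hne) key
  have hD' : (x * (A + C)) ^ 2 = A * B + B * C + C * A := by
    linear_combination hx2
  have hxa : 0 ≤ x * (A + C) := mul_nonneg hx (le_of_lt hAC)
  have hs : Real.sqrt (A * B + B * C + C * A) = x * (A + C) := by
    rw [← hD', Real.sqrt_sq hxa]
  have : x = Real.sqrt (A * B + B * C + C * A) / (A + C) := by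
    rw [hs]; field_simp
  simp [this]
end

section
/- For every z ∈ ℂ with z ≠ 0, writing (A, B, C) = κ(z), the inversion S satisfies κ(S(z)) = (B/|z|², A/|z|², C/|z|²); that is, S exchanges the curvatures A and B of the tricycle up to the common positive rescaling factor 1/|z|². -/
/-- The inversion `S(z) = 1/conj z` in the unit circle centered at `0`. -/
noncomputable def Smap (z : ℂ) : ℂ := ((starRingEnd ℂ) z)⁻¹

/-- **`S` swaps the curvatures `A` and `B` up to rescaling by `1/|z|²`.**
With `(A, B, C) = κ(z)` and `z ≠ 0`, one has
`κ(S(z)) = (B/|z|², A/|z|², C/|z|²)`. -/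
theorem kappa_Smap (z : ℂ) (hz : z ≠ 0) :
    kappa (Smap z) =
      ((kappa z).2.1 / ‖z‖ ^ 2,
       (kappa z).1 / ‖z‖ ^ 2,
       (kappa z).2.2 / ‖z‖ ^ 2) := by
  have hn : z.re ^ 2 + z.im ^ 2 ≠ 0 := by
    have := Complex.normSq_pos.mpr hz
    simp [Complex.normSq_apply] at this
    nlinarith [this]
  have habs : ‖z‖ ^ 2 = z.re ^ 2 + z.im ^ 2 := by
    rw [Complex.sq_norm, Complex.normSq_apply]; ring
  simp only [kappa, Smap, Complex.inv_re, Complex.inv_im, Complex.conj_re,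
    Complex.conj_im, Complex.normSq_apply, habs]
  have hn2 : z.im ^ 2 + z.re ^ 2 ≠ 0 := by rwa [add_comm] at hn
  have hn' : z.re * z.re + z.im * z.im ≠ 0 := by simpa [sq] using hn
  refine Prod.ext ?_ (Prod.ext ?_ ?_)
  · simp only [Prod.fst]
    field_simp [hn']
  · simp only [Prod.snd, Prod.fst]
    field_simp [hn']
  · simp only [Prod.snd]
    field_simp [hn']
end

section
/- For every z ∈ ℂ with z ≠ i, writing (A, B, C) = κ(z) and E = |z − i|², the inversion R satisfies κ(R(z)) = (A/E, C/E, B/E); that is, R exchanges the curvatures B and C of the tricycle up to the common positive rescaling factor 1/E. -/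
/-- The inversion `R(z) = i + 1/conj(z − i)` in the unit circle centered at `i`. -/
noncomputable def Rmap (z : ℂ) : ℂ := Complex.I + ((starRingEnd ℂ) (z - Complex.I))⁻¹

/-- **`R` swaps the curvatures `B` and `C` up to rescaling by `1/E`, `E = |z − i|²`.**
With `(A, B, C) = κ(z)` and `z ≠ i`, one has `κ(R(z)) = (A/E, C/E, B/E)`. -/
theorem kappa_Rmap (z : ℂ) (hz : z ≠ Complex.I) :
    kappa (Rmap z) =
      ((kappa z).1 / ‖z - Complex.I‖ ^ 2,
       (kappa z).2.2 / ‖z - Complex.I‖ ^ 2,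
       (kappa z).2.1 / ‖z - Complex.I‖ ^ 2) := by
  have hw : z - Complex.I ≠ 0 := sub_ne_zero.mpr hz
  have hn : Complex.normSq (z - Complex.I) ≠ 0 := by simpa using hw
  have habs : ‖z - Complex.I‖ ^ 2 = Complex.normSq (z - Complex.I) :=
    Complex.sq_norm _
  have hnsq : Complex.normSq (z - Complex.I) = z.re ^ 2 + (z.im - 1) ^ 2 := by
    simp [Complex.normSq_apply, Complex.sub_re, Complex.sub_im]
    ring
  have hkey : Complex.normSq ((starRingEnd ℂ) z - (starRingEnd ℂ) Complex.I) = z.re ^ 2 + (z.im - 1) ^ 2 := by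
    simp [Complex.normSq_apply]; ring
  simp only [kappa, Rmap, Complex.inv_def, map_sub, Complex.normSq_conj,
    Complex.add_re, Complex.add_im, Complex.mul_re, Complex.mul_im,
    Complex.conj_re, Complex.conj_im, Complex.sub_re, Complex.sub_im,
    Complex.I_re, Complex.I_im, Complex.ofReal_re, Complex.ofReal_im,
    Complex.inv_re, Complex.inv_im, habs, hnsq, hkey, Complex.normSq_ofReal,
    Prod.mk.injEq]
  have hE : z.re ^ 2 + (z.im - 1) ^ 2 ≠ 0 := by rw [← hnsq]; exact hn
  refine ⟨?_, ?_, ?_⟩ <;> field_simp <;> ring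
end

section
/- The composition S∘F has order three: for every z ∈ ℂ with z ≠ 0 and z ≠ i, (S∘F)((S∘F)(z)) = (F∘S)(z) and (S∘F)((S∘F)((S∘F)(z))) = z. Hence {id, F∘S, S∘F} forms a group isomorphic to ℤ₃ (the anchor-change group G of the tricycle). -/
/-- The reflection `F(z) = conj z + i` in the line `Im z = 1/2`. -/
noncomputable def Fmap (z : ℂ) : ℂ := (starRingEnd ℂ) z + Complex.I

/-- **`S∘F` has order three** (the anchor-change group `G = {id, FS, SF} ≅ ℤ₃`):
for `z ≠ 0`, `z ≠ i`, `(S∘F)² z = (F∘S) z` and `(S∘F)³ z = z`. -/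
theorem SF_order_three (z : ℂ) (hz0 : z ≠ 0) (hzi : z ≠ Complex.I) :
    Smap (Fmap (Smap (Fmap z))) = Fmap (Smap z) ∧
      Smap (Fmap (Smap (Fmap (Smap (Fmap z))))) = z := by
  have hzi' : z - Complex.I ≠ 0 := sub_ne_zero.mpr hzi
  have hI3 : Complex.I ^ 3 = -Complex.I := by simp [pow_succ, Complex.I_sq]
  have SF : ∀ w : ℂ, Smap (Fmap w) = (w - Complex.I)⁻¹ := by
    intro w
    simp [Smap, Fmap, Complex.conj_I, sub_eq_add_neg]
  have FS : Fmap (Smap z) = z⁻¹ + Complex.I := by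
    simp [Smap, Fmap]
  have first : Smap (Fmap (Smap (Fmap z))) = z⁻¹ + Complex.I := by
    rw [SF, SF]
    apply inv_eq_of_mul_eq_one_right
    field_simp
    ring_nf
    rw [hI3, Complex.I_sq]
    ring
  refine ⟨first.trans FS.symm, ?_⟩
  rw [first, SF]
  rw [inv_eq_iff_eq_inv]
  field_simp
  ring
end

section
/- The symmetry group Θ = gen{S, F, H} preserves the depth function: for every n ∈ ℕ, D (κ(F(z))) n ↔ D (κ(z)) n for all z ∈ ℂ; D (κ(S(z))) n ↔ D (κ(z)) n for all z ≠ 0; D (κ(R(z))) n ↔ D (κ(z)) n for all z ≠ i; and D (κ(H(z))) n ↔ D (κ(z)) n for all z ∈ ℂ. -/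
/-- The reflection `H(z) = −conj z` in the imaginary axis. -/
noncomputable def Hmap (z : ℂ) : ℂ := -(starRingEnd ℂ) z

/-- The curvature appended by a Descartes ascending step:
`a + b + c − 2√(ab + bc + ca)` (symmetric in the entries). -/
noncomputable def descartesStep (t : ℝ × ℝ × ℝ) : ℝ :=
  t.1 + t.2.1 + t.2.2 -
    2 * Real.sqrt (t.1 * t.2.1 + t.2.1 * t.2.2 + t.2.2 * t.1)

/-- The Descartes ascending step `π`: delete a maximal entry of the triple and
append `a + b + c − 2√(ab + bc + ca)`. -/
noncomputable def piStep (t : ℝ × ℝ × ℝ) : ℝ × ℝ × ℝ :=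
  if t.2.1 ≤ t.1 ∧ t.2.2 ≤ t.1 then (t.2.1, t.2.2, descartesStep t)
  else if t.2.2 ≤ t.2.1 then (t.1, t.2.2, descartesStep t)
  else (t.1, t.2.1, descartesStep t)

/-- The depth relation: `D t 0` iff some entry of `t` is `≤ 0`, and `D t (n+1)` iff
all entries of `t` are `> 0` and `D (π t) n`. -/
inductive DepthRel : ℝ × ℝ × ℝ → ℕ → Prop
  | zero (t : ℝ × ℝ × ℝ) (h : t.1 ≤ 0 ∨ t.2.1 ≤ 0 ∨ t.2.2 ≤ 0) : DepthRel t 0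
  | succ (t : ℝ × ℝ × ℝ) (n : ℕ) (h : 0 < t.1 ∧ 0 < t.2.1 ∧ 0 < t.2.2)
      (hD : DepthRel (piStep t) n) : DepthRel t (n + 1)

lemma depth_zero_iff (t : ℝ × ℝ × ℝ) :
    DepthRel t 0 ↔ (t.1 ≤ 0 ∨ t.2.1 ≤ 0 ∨ t.2.2 ≤ 0) :=
  ⟨fun h => by cases h with | zero _ h => exact h, DepthRel.zero t⟩

lemma depth_succ_iff (t : ℝ × ℝ × ℝ) (n : ℕ) :
    DepthRel t (n+1) ↔ (0 < t.1 ∧ 0 < t.2.1 ∧ 0 < t.2.2) ∧ DepthRel (piStep t) n :=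
  ⟨fun h => by cases h with | succ _ _ h hD => exact ⟨h, hD⟩,
   fun h => DepthRel.succ t n h.1 h.2⟩

lemma ds_symm12 (a b d : ℝ) : descartesStep (b,a,d) = descartesStep (a,b,d) := by
  simp only [descartesStep]; ring_nf
lemma ds_symm23 (a b d : ℝ) : descartesStep (a,d,b) = descartesStep (a,b,d) := by
  simp only [descartesStep]; ring_nf
lemma ds_symm13 (a b d : ℝ) : descartesStep (d,b,a) = descartesStep (a,b,d) := by
  simp only [descartesStep]; ring_nf


lemma pi12 (a b d : ℝ) :
    piStep (b,a,d) = piStep (a,b,d) ∨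
    (∃ x y s, piStep (a,b,d) = (x,y,s) ∧ piStep (b,a,d) = (y,x,s)) := by
  by_cases hba : b ≤ a <;> by_cases hab : a ≤ b <;> by_cases hda : d ≤ a <;> by_cases hdb : d ≤ b <;>
    simp only [piStep, ds_symm12] <;> split_ifs <;>
    first
      | tauto
      | (left; rfl)
      | (left; simp only [Prod.mk.injEq]; and_intros <;> first | trivial | linarith)
      | (right; exact ⟨_, _, _, rfl, rfl⟩)
      | (right; refine ⟨_, _, _, rfl, ?_⟩; simp only [Prod.mk.injEq];
         and_intros <;> first | trivial | linarith)

lemma pi23 (a b d : ℝ) :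
    piStep (a,d,b) = piStep (a,b,d) ∨
    (∃ x y s, piStep (a,b,d) = (x,y,s) ∧ piStep (a,d,b) = (y,x,s)) := by
  by_cases hba : b ≤ a <;> by_cases hda : d ≤ a <;> by_cases hdb : d ≤ b <;> by_cases hbd : b ≤ d <;>
    simp only [piStep, ds_symm23] <;> split_ifs <;>
    first
      | tauto
      | (left; rfl)
      | (left; simp only [Prod.mk.injEq]; and_intros <;> first | trivial | linarith)
      | (right; exact ⟨_, _, _, rfl, rfl⟩)
      | (right; refine ⟨_, _, _, rfl, ?_⟩; simp only [Prod.mk.injEq];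
         and_intros <;> first | trivial | linarith)

set_option maxHeartbeats 2000000 in
lemma pi13 (a b d : ℝ) :
    piStep (d,b,a) = piStep (a,b,d) ∨
    (∃ x y s, piStep (a,b,d) = (x,y,s) ∧ piStep (d,b,a) = (y,x,s)) := by
  by_cases hba : b ≤ a <;> by_cases hab : a ≤ b <;> by_cases hda : d ≤ a <;>
    by_cases had : a ≤ d <;> by_cases hdb : d ≤ b <;> by_cases hbd : b ≤ d <;>
    simp only [piStep, ds_symm13] <;> split_ifs <;>
    first
      | tauto
      | (left; rfl)
      | (left; simp only [Prod.mk.injEq]; and_intros <;> first | trivial | linarith)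
      | (right; exact ⟨_, _, _, rfl, rfl⟩)
      | (right; refine ⟨_, _, _, rfl, ?_⟩; simp only [Prod.mk.injEq];
         and_intros <;> first | trivial | linarith)

lemma depth_swap12 : ∀ n : ℕ, ∀ a b d : ℝ,
    DepthRel (b,a,d) n ↔ DepthRel (a,b,d) n := by
  intro n
  induction n with
  | zero => intro a b d; rw [depth_zero_iff, depth_zero_iff]; dsimp only; tauto
  | succ n ih =>
    intro a b d
    rw [depth_succ_iff, depth_succ_iff]
    have hpos : (0 < b ∧ 0 < a ∧ 0 < d) ↔ (0 < a ∧ 0 < b ∧ 0 < d) := by tauto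
    rcases pi12 a b d with h | ⟨x, y, s, h1, h2⟩
    · rw [h]; exact and_congr hpos Iff.rfl
    · rw [h1, h2]; exact and_congr hpos (ih y x s).symm

lemma depth_swap23 : ∀ n : ℕ, ∀ a b d : ℝ,
    DepthRel (a,d,b) n ↔ DepthRel (a,b,d) n := by
  intro n
  induction n with
  | zero => intro a b d; rw [depth_zero_iff, depth_zero_iff]; dsimp only; tauto
  | succ n ih =>
    intro a b d
    rw [depth_succ_iff, depth_succ_iff]
    have hpos : (0 < a ∧ 0 < d ∧ 0 < b) ↔ (0 < a ∧ 0 < b ∧ 0 < d) := by tauto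
    rcases pi23 a b d with h | ⟨x, y, s, h1, h2⟩
    · rw [h]; exact and_congr hpos Iff.rfl
    · rw [h1, h2]; exact and_congr hpos (depth_swap12 n x y s)

lemma depth_swap13 : ∀ n : ℕ, ∀ a b d : ℝ,
    DepthRel (d,b,a) n ↔ DepthRel (a,b,d) n := by
  intro n
  induction n with
  | zero => intro a b d; rw [depth_zero_iff, depth_zero_iff]; dsimp only; tauto
  | succ n ih =>
    intro a b d
    rw [depth_succ_iff, depth_succ_iff]
    have hpos : (0 < d ∧ 0 < b ∧ 0 < a) ↔ (0 < a ∧ 0 < b ∧ 0 < d) := by tauto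
    rcases pi13 a b d with h | ⟨x, y, s, h1, h2⟩
    · rw [h]; exact and_congr hpos Iff.rfl
    · rw [h1, h2]; exact and_congr hpos (depth_swap12 n x y s)

/-- Scaling a triple by a factor. -/
noncomputable def scaleT (c : ℝ) (t : ℝ × ℝ × ℝ) : ℝ × ℝ × ℝ :=
  (c * t.1, c * t.2.1, c * t.2.2)

lemma ds_scale {c : ℝ} (hc : 0 < c) (t : ℝ × ℝ × ℝ) :
    descartesStep (scaleT c t) = c * descartesStep t := by
  obtain ⟨a, b, d⟩ := t
  simp only [descartesStep, scaleT]
  have h : c*a*(c*b) + c*b*(c*d) + c*d*(c*a) = c^2 * (a*b + b*d + d*a) := by ring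
  rw [h, Real.sqrt_mul (by positivity), Real.sqrt_sq hc.le]
  ring

lemma pi_scale {c : ℝ} (hc : 0 < c) (t : ℝ × ℝ × ℝ) :
    piStep (scaleT c t) = scaleT c (piStep t) := by
  obtain ⟨a, b, d⟩ := t
  have hds := ds_scale hc (a, b, d)
  simp only [scaleT] at hds
  simp only [piStep, scaleT, hds, mul_le_mul_iff_right₀ hc]
  split_ifs <;> rfl

lemma depth_scale {c : ℝ} (hc : 0 < c) : ∀ n : ℕ, ∀ t : ℝ × ℝ × ℝ,
    DepthRel (scaleT c t) n ↔ DepthRel t n := by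
  intro n
  induction n with
  | zero =>
    intro t
    rw [depth_zero_iff, depth_zero_iff]
    simp only [scaleT]
    constructor <;>
      · rintro (h | h | h)
        · exact Or.inl (by nlinarith)
        · exact Or.inr (Or.inl (by nlinarith))
        · exact Or.inr (Or.inr (by nlinarith))
  | succ n ih =>
    intro t
    rw [depth_succ_iff, depth_succ_iff, pi_scale hc]
    have hp : ∀ x : ℝ, (0 < c * x ↔ 0 < x) := fun x => by
      constructor <;> intro h <;> nlinarith
    simp only [scaleT, hp]
    exact and_congr Iff.rfl (ih _)


lemma kappa_F (z : ℂ) :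
    kappa (Fmap z) = (z.im, z.re ^ 2 + z.im ^ 2 - z.im, 1 - z.im) := by
  simp only [kappa, Fmap, Complex.add_im, Complex.add_re, Complex.conj_re, Complex.conj_im,
    Complex.I_re, Complex.I_im, Prod.mk.injEq]
  refine ⟨by ring, by ring, by ring⟩

lemma kappa_H (z : ℂ) : kappa (Hmap z) = kappa z := by
  simp only [kappa, Hmap, Complex.neg_re, Complex.neg_im, Complex.conj_re, Complex.conj_im,
    Prod.mk.injEq]
  refine ⟨by ring, by ring, by ring⟩

lemma kappa_S {z : ℂ} (hz : z ≠ 0) :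
    kappa (Smap z) = scaleT (Complex.normSq z)⁻¹
      (z.re ^ 2 + z.im ^ 2 - z.im, 1 - z.im, z.im) := by
  have hN : (0:ℝ) < Complex.normSq z := Complex.normSq_pos.mpr hz
  have hsq : Complex.normSq z = z.re ^ 2 + z.im ^ 2 := by
    rw [Complex.normSq_apply]; ring
  have hne : z.re ^ 2 + z.im ^ 2 ≠ 0 := by rw [← hsq]; exact hN.ne'
  simp only [kappa, Smap, scaleT, Complex.inv_re, Complex.inv_im, Complex.conj_re,
    Complex.conj_im, Complex.normSq_conj, Prod.mk.injEq, hsq]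
  refine ⟨by field_simp; try ring, by field_simp; try ring, by field_simp; try ring⟩

lemma kappa_R {z : ℂ} (hz : z ≠ Complex.I) :
    kappa (Rmap z) = scaleT (Complex.normSq (z - Complex.I))⁻¹
      (1 - z.im, z.im, z.re ^ 2 + z.im ^ 2 - z.im) := by
  have hw : z - Complex.I ≠ 0 := sub_ne_zero.mpr hz
  have hM : (0:ℝ) < Complex.normSq (z - Complex.I) := Complex.normSq_pos.mpr hw
  have hsq : Complex.normSq (z - Complex.I) = z.re ^ 2 + (z.im - 1) ^ 2 := by
    rw [Complex.normSq_apply]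
    simp [Complex.sub_re, Complex.sub_im, Complex.I_re, Complex.I_im]
    ring
  have hne : z.re ^ 2 + (z.im - 1) ^ 2 ≠ 0 := by rw [← hsq]; exact hM.ne'
  simp only [kappa, Rmap, scaleT, Complex.add_re, Complex.add_im, Complex.inv_re, Complex.inv_im,
    Complex.conj_re, Complex.conj_im, Complex.normSq_conj, Complex.sub_re, Complex.sub_im,
    Complex.I_re, Complex.I_im, Prod.mk.injEq, hsq]
  refine ⟨by field_simp; try ring, by field_simp; try ring, by field_simp; try ring⟩

/-- **The symmetry group `Θ = gen{S, F, H}` preserves the depth function.** -/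
theorem theta_preserves_depth (n : ℕ) :
    (∀ z : ℂ, DepthRel (kappa (Fmap z)) n ↔ DepthRel (kappa z) n) ∧
      (∀ z : ℂ, z ≠ 0 → (DepthRel (kappa (Smap z)) n ↔ DepthRel (kappa z) n)) ∧
      (∀ z : ℂ, z ≠ Complex.I →
        (DepthRel (kappa (Rmap z)) n ↔ DepthRel (kappa z) n)) ∧
      (∀ z : ℂ, DepthRel (kappa (Hmap z)) n ↔ DepthRel (kappa z) n) := by

  refine ⟨fun z => ?_, fun z hz => ?_, fun z hz => ?_, fun z => ?_⟩
  · rw [kappa_F]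
    exact depth_swap13 n (1 - z.im) (z.re ^ 2 + z.im ^ 2 - z.im) z.im
  · rw [kappa_S hz,
      depth_scale (inv_pos.mpr (Complex.normSq_pos.mpr hz)) n]
    exact depth_swap12 n (1 - z.im) (z.re ^ 2 + z.im ^ 2 - z.im) z.im
  · rw [kappa_R hz,
      depth_scale (inv_pos.mpr (Complex.normSq_pos.mpr (sub_ne_zero.mpr hz))) n]
    exact depth_swap23 n (1 - z.im) (z.re ^ 2 + z.im ^ 2 - z.im) z.im
  · rw [kappa_H]
end

section
/- Only rational spinors generate rational packings: let x ≥ 0 and y ∈ ℝ, and set (A, B, C) = (1 − y, x² + y² − y, y) and D = A + B + C + 2√(AB + BC + CA). If A, B, C and D are all rational, then x and y are rational. -/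
/-- **Only rational spinors generate rational packings.**
Let `x ≥ 0`, `y ∈ ℝ`, `(A, B, C) = (1 − y, x² + y² − y, y)` and
`D = A + B + C + 2√(AB + BC + CA)`. If `A`, `B`, `C`, `D` are all rational,
then so are `x` and `y`. -/
theorem rational_packing_rational_spinor (x y : ℝ) (hx : 0 ≤ x)
    (hA : ∃ q : ℚ, 1 - y = q)
    (hB : ∃ q : ℚ, x ^ 2 + y ^ 2 - y = q)
    (hC : ∃ q : ℚ, y = q)
    (hD : ∃ q : ℚ,
      (1 - y) + (x ^ 2 + y ^ 2 - y) + y +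
          2 * Real.sqrt ((1 - y) * (x ^ 2 + y ^ 2 - y) +
            (x ^ 2 + y ^ 2 - y) * y + y * (1 - y)) = q) :
    (∃ q : ℚ, x = q) ∧ (∃ q : ℚ, y = q) := by
  obtain ⟨qA, hA⟩ := hA
  obtain ⟨qB, hB⟩ := hB
  obtain ⟨qC, hC⟩ := hC
  obtain ⟨qD, hD⟩ := hD
  have hsq : (1 - y) * (x ^ 2 + y ^ 2 - y) +
      (x ^ 2 + y ^ 2 - y) * y + y * (1 - y) = x ^ 2 := by ring
  rw [hsq, Real.sqrt_sq hx] at hD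
  refine ⟨⟨(qD - qA - qB - qC) / 2, ?_⟩, ⟨qC, hC⟩⟩
  push_cast
  linarith [hD, hA, hB, hC]
end

section
/- The translation T(z) = z + 1 of the projective spinor plane implements a Descartes move: for every z ∈ ℂ, writing (A, B, C) = κ(z) and x = Re z, one has κ(z + 1) = (A, A + B + C + 2x, C); in particular, if x ≥ 0, the middle entry equals the Descartes completion A + B + C + 2√(AB + BC + CA), i.e. T replaces disk B of the tricycle by a disk inscribed between A and C that completes (A, B, C) to a Descartes configuration. -/
/-- **The translation `T(z) = z + 1` implements a Descartes move.**
With `(A, B, C) = κ(z)` and `x = Re z`, `κ(z + 1) = (A, A + B + C + 2x, C)`;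
if moreover `x ≥ 0`, the middle entry is the Descartes completion
`A + B + C + 2√(AB + BC + CA)`. -/
theorem kappa_translation (z : ℂ) :
    kappa (z + 1) =
        ((kappa z).1,
         (kappa z).1 + (kappa z).2.1 + (kappa z).2.2 + 2 * z.re,
         (kappa z).2.2) ∧
      (0 ≤ z.re →
        (kappa z).1 + (kappa z).2.1 + (kappa z).2.2 + 2 * z.re =
          (kappa z).1 + (kappa z).2.1 + (kappa z).2.2 +
            2 * Real.sqrt ((kappa z).1 * (kappa z).2.1 +
              (kappa z).2.1 * (kappa z).2.2 + (kappa z).2.2 * (kappa z).1)) := by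
  constructor
  · simp only [kappa, Complex.add_re, Complex.add_im, Complex.one_re, Complex.one_im]
    ring_nf
  · intro hx
    have key : (kappa z).1 * (kappa z).2.1 + (kappa z).2.1 * (kappa z).2.2 +
        (kappa z).2.2 * (kappa z).1 = z.re ^ 2 := by
      simp only [kappa]; ring
    rw [key, Real.sqrt_sq hx]
end
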